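/- Let f : M_{m×n}(ℂ) → ℝ satisfy f(BVC) = f(V) for all V ∈ M_{m×n}(ℂ), all B ∈ U(m) and all C ∈ U(n). Then for any V, W ∈ M_{m×n}(ℂ): if tr((VV*)^α) = tr((WW*)^α) for every α = 1, …, m, then f(V) = f(W). In particular, f(V) depends only on the quantities tr((VV*)^α), α = 1, …, m. -/

import Mathlib

open Matrix Finset List

/-! ### Auxiliary lemmas -/

private lemma inner_toEuclideanLin_gram (m n : ℕ) (V : Matrix (Fin m) (Fin n) ℂ)
    (x : EuclideanSpace ℂ (Fin m)) :
    (inner ℂ (Matrix.toEuclideanLin Vᵀ x) (Matrix.toEuclideanLin Vᵀ x) : ℂ) =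
      ∑ i, ∑ j, (starRingEnd ℂ) (x i) * x j * (V * Vᴴ) j i := by
  simp only [PiLp.inner_apply, RCLike.inner_apply, Matrix.toEuclideanLin_apply,
    Matrix.mul_apply, Matrix.conjTranspose_apply, WithLp.equiv_symm_apply,
    Matrix.mulVec, dotProduct, Matrix.transpose_apply, map_sum, _root_.map_mul,
    Finset.mul_sum, Finset.sum_mul]
  refine ((Finset.sum_congr rfl fun k _ => Finset.sum_comm).trans Finset.sum_comm).trans ?_
  refine Eq.trans ?_ Finset.sum_comm
  refine Finset.sum_congr rfl fun i _ => Finset.sum_comm.trans ?_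
  refine Finset.sum_congr rfl fun j _ => Finset.sum_congr rfl fun k _ => ?_
  simp only [RCLike.star_def]
  ring

/-- If two matrices have the same Gram matrix of rows, they differ by a right unitary factor. -/
private lemma gram_exists_unitary (m n : ℕ) (V W : Matrix (Fin m) (Fin n) ℂ)
    (h : V * Vᴴ = W * Wᴴ) : ∃ C ∈ Matrix.unitaryGroup (Fin n) ℂ, V * C = W := by
  classical
  set LV := Matrix.toEuclideanLin Vᵀ with hLV
  set LW := Matrix.toEuclideanLin Wᵀ with hLW
  have hinner : ∀ x, (inner ℂ (LV x) (LV x) : ℂ) = inner ℂ (LW x) (LW x) := by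
    intro x
    rw [hLV, hLW, inner_toEuclideanLin_gram, inner_toEuclideanLin_gram, h]
  have hnorm : ∀ x, ‖LV x‖ = ‖LW x‖ := by
    intro x
    have h1 : ‖LV x‖ ^ 2 = ‖LW x‖ ^ 2 := by
      have := congrArg Complex.re (hinner x)
      rwa [← inner_self_eq_norm_sq (𝕜 := ℂ), ← inner_self_eq_norm_sq (𝕜 := ℂ)]
    exact (pow_left_strictMonoOn₀ two_ne_zero).injOn.eq_iff
      (Set.mem_setOf.2 (norm_nonneg _)) (Set.mem_setOf.2 (norm_nonneg _)) |>.mp h1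
  have hker : LinearMap.ker LV ≤ LinearMap.ker LW := by
    intro x hx
    rw [LinearMap.mem_ker] at hx ⊢
    have := hnorm x
    rw [hx, norm_zero] at this
    exact norm_eq_zero.mp this.symm
  let g : _ →ₗ[ℂ] EuclideanSpace ℂ (Fin n) := (LinearMap.ker LV).liftQ LW hker
  let e := LV.quotKerEquivRange
  let φlin : LinearMap.range LV →ₗ[ℂ] EuclideanSpace ℂ (Fin n) := g ∘ₗ (e.symm : _ →ₗ[ℂ] _)
  have hφ : ∀ x, φlin ⟨LV x, LinearMap.mem_range_self _ x⟩ = LW x := by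
    intro x
    have h1 : e.symm ⟨LV x, LinearMap.mem_range_self _ x⟩ = (LinearMap.ker LV).mkQ x :=
      LV.quotKerEquivRange_symm_apply_image x _
    simp only [φlin, LinearMap.coe_comp, Function.comp_apply, LinearEquiv.coe_coe, h1]
    simp [g, Submodule.mkQ_apply, Submodule.liftQ_apply]
  have hφnorm : ∀ s : LinearMap.range LV, ‖φlin s‖ = ‖s‖ := by
    rintro ⟨s, x, rfl⟩
    rw [hφ x]
    exact (hnorm x).symm
  let φ : (LinearMap.range LV) →ₗᵢ[ℂ] EuclideanSpace ℂ (Fin n) := ⟨φlin, hφnorm⟩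
  let U := φ.extend
  have hU : ∀ x, U (LV x) = LW x := by
    intro x
    have := φ.extend_apply ⟨LV x, LinearMap.mem_range_self _ x⟩
    rw [this]
    exact hφ x
  refine ⟨Matrix.of fun j k => U (EuclideanSpace.single j 1) k, ?_, ?_⟩
  · rw [Matrix.mem_unitaryGroup_iff]
    ext j j'
    have hinner2 : (inner ℂ (U (EuclideanSpace.single j' (1:ℂ))) (U (EuclideanSpace.single j 1)) : ℂ)
        = inner ℂ (EuclideanSpace.single j' (1:ℂ)) (EuclideanSpace.single j (1:ℂ)) :=
      U.inner_map_map _ _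
    simp only [PiLp.inner_apply, RCLike.inner_apply, EuclideanSpace.single_apply] at hinner2
    simp only [Matrix.mul_apply, Matrix.of_apply, Matrix.star_apply, Matrix.one_apply, star]
    calc ∑ k, U (EuclideanSpace.single j 1) k * (starRingEnd ℂ) (U (EuclideanSpace.single j' 1) k)
        = ∑ k, (starRingEnd ℂ) (U (EuclideanSpace.single j' 1) k) * U (EuclideanSpace.single j 1) k := by
          exact Finset.sum_congr rfl fun k _ => mul_comm _ _
      _ = if j = j' then 1 else 0 := by
          rw [show (∑ k, (starRingEnd ℂ) (U (EuclideanSpace.single j' 1) k) * U (EuclideanSpace.single j 1) k) = ∑ k, U (EuclideanSpace.single j 1) k * (starRingEnd ℂ) (U (EuclideanSpace.single j' 1) k) from Finset.sum_congr rfl fun k _ => mul_comm _ _, hinner2]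
          simp [eq_comm]
  · ext i k
    have hrow : ∀ (M : Matrix (Fin m) (Fin n) ℂ) (i : Fin m),
        (Matrix.toEuclideanLin Mᵀ) (EuclideanSpace.single i 1)
          = ∑ j, M i j • EuclideanSpace.single j 1 := by
      intro M i
      ext k
      rw [WithLp.ofLp_sum, Finset.sum_apply]
      simp [Matrix.toEuclideanLin_apply, Matrix.mulVec, dotProduct,
        EuclideanSpace.single_apply, Finset.sum_ite_eq, Finset.sum_ite_eq']
    have h1 : U (LV (EuclideanSpace.single i 1)) = LW (EuclideanSpace.single i 1) := hU _
    have h2 : LV (EuclideanSpace.single i 1) = ∑ j, V i j • EuclideanSpace.single j 1 := hrow V i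
    have h3 : LW (EuclideanSpace.single i 1) k = W i k := by
      rw [hrow W i, WithLp.ofLp_sum, Finset.sum_apply]
      simp [EuclideanSpace.single_apply, Finset.sum_ite_eq, Finset.sum_ite_eq']
    calc (V * Matrix.of fun j k => U (EuclideanSpace.single j 1) k) i k
        = ∑ j, V i j * U (EuclideanSpace.single j 1) k := by
          simp [Matrix.mul_apply]
      _ = (∑ j, V i j • U (EuclideanSpace.single j 1)) k := by
          rw [WithLp.ofLp_sum, Finset.sum_apply]; rfl
      _ = U (∑ j, V i j • EuclideanSpace.single j 1) k := by
          rw [map_sum]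
          have : (∑ j, V i j • U (EuclideanSpace.single j 1))
              = ∑ j, U (V i j • EuclideanSpace.single j 1) :=
            Finset.sum_congr rfl fun j _ => (U.map_smul _ _).symm
          rw [this]
      _ = W i k := by rw [← h2, h1, h3]

private lemma aeval_psum {m : ℕ} (f : Fin m → ℝ) (k : ℕ) :
    MvPolynomial.aeval f (MvPolynomial.psum (Fin m) ℝ k) = ∑ i, f i ^ k := by
  simp [MvPolynomial.psum, map_sum]

/-- Equal power sums (degrees 1 through m) imply equal multisets of values. -/
private lemma multiset_eq_of_psum_eq {m : ℕ} (lam mu : Fin m → ℝ)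
    (h : ∀ α : ℕ, 1 ≤ α → α ≤ m → ∑ i, lam i ^ α = ∑ i, mu i ^ α) :
    Multiset.map lam Finset.univ.val = Multiset.map mu Finset.univ.val := by
  have hes : ∀ k, k ≤ m →
      MvPolynomial.aeval lam (MvPolynomial.esymm (Fin m) ℝ k)
        = MvPolynomial.aeval mu (MvPolynomial.esymm (Fin m) ℝ k) := by
    intro k
    induction k using Nat.strong_induction_on with
    | _ k ih =>
      intro hk
      rcases Nat.eq_zero_or_pos k with rfl | hpos
      · simp [MvPolynomial.esymm_zero]
      · have hl := congrArg (MvPolynomial.aeval lam) (MvPolynomial.mul_esymm_eq_sum (Fin m) ℝ k)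
        have hmu := congrArg (MvPolynomial.aeval mu) (MvPolynomial.mul_esymm_eq_sum (Fin m) ℝ k)
        simp only [_root_.map_mul, map_sum, map_pow, map_neg, _root_.map_one, map_natCast] at hl hmu
        have hsum : ∑ a ∈ Finset.HasAntidiagonal.antidiagonal k with a.1 < k,
              (-1:ℝ) ^ a.1 * MvPolynomial.aeval lam (MvPolynomial.esymm (Fin m) ℝ a.1)
                * MvPolynomial.aeval lam (MvPolynomial.psum (Fin m) ℝ a.2)
            = ∑ a ∈ Finset.HasAntidiagonal.antidiagonal k with a.1 < k,
              (-1:ℝ) ^ a.1 * MvPolynomial.aeval mu (MvPolynomial.esymm (Fin m) ℝ a.1)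
                * MvPolynomial.aeval mu (MvPolynomial.psum (Fin m) ℝ a.2) := by
          refine Finset.sum_congr rfl fun a ha => ?_
          rw [Finset.mem_filter, Finset.HasAntidiagonal.mem_antidiagonal] at ha
          have h1 : a.1 < k := ha.2
          have h2 : 1 ≤ a.2 := by omega
          have h3 : a.2 ≤ m := by omega
          rw [ih a.1 h1 (by omega), aeval_psum, aeval_psum, h a.2 h2 h3]
        have hk0 : (k : ℝ) ≠ 0 := Nat.cast_ne_zero.mpr (by omega)
        apply mul_left_cancel₀ hk0
        rw [hl, hmu, hsum]
  have hcard1 : Multiset.card (Multiset.map lam Finset.univ.val) = m := by simp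
  have hcard2 : Multiset.card (Multiset.map mu Finset.univ.val) = m := by simp
  have hpoly : ((Multiset.map lam Finset.univ.val).map fun t => Polynomial.X - Polynomial.C t).prod
      = ((Multiset.map mu Finset.univ.val).map fun t => Polynomial.X - Polynomial.C t).prod := by
    ext k
    rcases le_or_gt k m with hkm | hkm
    · rw [Multiset.prod_X_sub_C_coeff _ (by rw [hcard1]; exact hkm),
        Multiset.prod_X_sub_C_coeff _ (by rw [hcard2]; exact hkm), hcard1, hcard2]
      congr 1
      rw [← MvPolynomial.aeval_esymm_eq_multiset_esymm (σ := Fin m) (R := ℝ) (S := ℝ),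
        ← MvPolynomial.aeval_esymm_eq_multiset_esymm (σ := Fin m) (R := ℝ) (S := ℝ)]
      exact hes (m - k) (Nat.sub_le _ _)
    · rw [Polynomial.coeff_eq_zero_of_natDegree_lt, Polynomial.coeff_eq_zero_of_natDegree_lt]
      · rw [Polynomial.natDegree_multiset_prod_X_sub_C_eq_card, hcard2]; exact hkm
      · rw [Polynomial.natDegree_multiset_prod_X_sub_C_eq_card, hcard1]; exact hkm
  have := congrArg Polynomial.roots hpoly
  rwa [Polynomial.roots_multiset_prod_X_sub_C, Polynomial.roots_multiset_prod_X_sub_C] at this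

private lemma exists_perm_of_multiset_eq {m : ℕ} (lam mu : Fin m → ℝ)
    (h : Multiset.map lam Finset.univ.val = Multiset.map mu Finset.univ.val) :
    ∃ σ : Equiv.Perm (Fin m), lam = mu ∘ σ := by
  have hperm : List.ofFn lam ~ List.ofFn mu := by
    rw [← Multiset.coe_eq_coe]
    have h1 : ∀ (f : Fin m → ℝ), (↑(List.ofFn f) : Multiset ℝ) = Multiset.map f Finset.univ.val := by
      intro f
      rw [List.ofFn_eq_map]
      rfl
    rw [h1, h1, h]
  have hp : List.ofFn (lam ∘ Tuple.sort lam) ~ List.ofFn (mu ∘ Tuple.sort mu) :=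
    (((Tuple.sort lam).ofFn_comp_perm lam).trans hperm).trans
      ((Tuple.sort mu).ofFn_comp_perm mu).symm
  have hsorted : lam ∘ Tuple.sort lam = mu ∘ Tuple.sort mu :=
    List.ofFn_injective (List.Perm.eq_of_sortedLE
      (List.sortedLE_ofFn_iff.2 (Tuple.monotone_sort lam)) (List.sortedLE_ofFn_iff.2 (Tuple.monotone_sort mu)) hp)
  refine ⟨(Tuple.sort lam).symm.trans (Tuple.sort mu), ?_⟩
  funext i
  have := congrFun hsorted ((Tuple.sort lam).symm i)
  simpa using this

private lemma conj_diag {N : ℕ} {A : Matrix (Fin N) (Fin N) ℂ} (hA : A.IsHermitian) :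
    (star (hA.eigenvectorUnitary : Matrix (Fin N) (Fin N) ℂ)) * A
      * (hA.eigenvectorUnitary : Matrix (Fin N) (Fin N) ℂ)
      = Matrix.diagonal (Complex.ofReal ∘ hA.eigenvalues) := by
  set U : Matrix (Fin N) (Fin N) ℂ := (hA.eigenvectorUnitary : Matrix (Fin N) (Fin N) ℂ) with hU
  set D : Matrix (Fin N) (Fin N) ℂ := Matrix.diagonal (Complex.ofReal ∘ hA.eigenvalues) with hD
  have hS : A = U * D * star U := hA.spectral_theorem
  have h1 : star U * U = 1 := Unitary.coe_star_mul_self _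
  have := congrArg (fun M => star U * M * U) hS
  rw [this]
  calc star U * (U * D * star U) * U = (star U * U) * D * (star U * U) := by noncomm_ring
    _ = D := by rw [h1, one_mul, mul_one]

private lemma trace_pow_eq {N : ℕ} {A : Matrix (Fin N) (Fin N) ℂ} (hA : A.IsHermitian) (α : ℕ) :
    (A ^ α).trace = ∑ i, (hA.eigenvalues i : ℂ) ^ α := by
  set U : Matrix (Fin N) (Fin N) ℂ := (hA.eigenvectorUnitary : Matrix (Fin N) (Fin N) ℂ) with hU
  set D : Matrix (Fin N) (Fin N) ℂ := Matrix.diagonal (Complex.ofReal ∘ hA.eigenvalues) with hD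
  have hS : A = U * D * star U := hA.spectral_theorem
  have h1 : star U * U = 1 := Unitary.coe_star_mul_self _
  have h2 : U * star U = 1 := Unitary.coe_mul_star_self _
  have key : A ^ α = U * D ^ α * star U := by
    induction α with
    | zero => simp only [pow_zero, mul_one]; exact h2.symm
    | succ k ihk =>
      rw [pow_succ, ihk, pow_succ]
      calc U * D ^ k * star U * A = U * D ^ k * star U * (U * D * star U) := by rw [← hS]
        _ = U * D ^ k * (star U * U) * D * star U := by noncomm_ring
        _ = U * (D ^ k * D) * star U := by rw [h1]; noncomm_ring
  rw [key, Matrix.trace_mul_comm, ← Matrix.mul_assoc, h1, one_mul, hD,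
    Matrix.diagonal_pow, Matrix.trace_diagonal]
  simp

private lemma perm_matrix_unitary {m : ℕ} (σ : Equiv.Perm (Fin m)) :
    (σ.toPEquiv.toMatrix : Matrix (Fin m) (Fin m) ℂ) ∈ Matrix.unitaryGroup (Fin m) ℂ := by
  rw [Matrix.mem_unitaryGroup_iff]
  ext i j
  simp only [Matrix.mul_apply, Matrix.star_apply, PEquiv.toMatrix_toPEquiv_apply, Pi.single_apply,
    Matrix.one_apply]
  rw [Finset.sum_eq_single (σ i)]
  · by_cases hij : i = j <;> simp [hij, Equiv.apply_eq_iff_eq, (Equiv.injective σ).eq_iff, eq_comm]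
  · intro k _ hk
    simp [hk]
  · simp

/-! ### Main theorem -/

set_option maxHeartbeats 1000000 in
/-- A `U(m) × U(n)`-invariant function on `M_{m×n}(ℂ)` depends only on the
traces `tr((VV*)^α)`, `α = 1, …, m`. -/
theorem unitary_invariant_depends_on_traces (m n : ℕ)
    (f : Matrix (Fin m) (Fin n) ℂ → ℝ)
    (hinv : ∀ V : Matrix (Fin m) (Fin n) ℂ,
      ∀ B ∈ Matrix.unitaryGroup (Fin m) ℂ, ∀ C ∈ Matrix.unitaryGroup (Fin n) ℂ,
        f (B * V * C) = f V) :
    ∀ V W : Matrix (Fin m) (Fin n) ℂ,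
      (∀ α : ℕ, 1 ≤ α → α ≤ m → ((V * Vᴴ) ^ α).trace = ((W * Wᴴ) ^ α).trace) →
      f V = f W := by
  intro V W htr
  classical
  have hAV : (V * Vᴴ).IsHermitian := Matrix.isHermitian_mul_conjTranspose_self V
  have hAW : (W * Wᴴ).IsHermitian := Matrix.isHermitian_mul_conjTranspose_self W
  set evV := hAV.eigenvalues with hevV
  set evW := hAW.eigenvalues with hevW
  -- power sums of eigenvalues agree
  have hps : ∀ α : ℕ, 1 ≤ α → α ≤ m → ∑ i, evV i ^ α = ∑ i, evW i ^ α := by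
    intro α h1 h2
    have := htr α h1 h2
    rw [trace_pow_eq hAV, trace_pow_eq hAW] at this
    have : ((∑ i, evV i ^ α : ℝ) : ℂ) = ((∑ i, evW i ^ α : ℝ) : ℂ) := by push_cast; exact this
    exact_mod_cast this
  obtain ⟨σ, hσ⟩ := exists_perm_of_multiset_eq evV evW (multiset_eq_of_psum_eq evV evW hps)
  -- diagonalize
  set UV : Matrix (Fin m) (Fin m) ℂ := (hAV.eigenvectorUnitary : Matrix (Fin m) (Fin m) ℂ) with hUV
  set UW : Matrix (Fin m) (Fin m) ℂ := (hAW.eigenvectorUnitary : Matrix (Fin m) (Fin m) ℂ) with hUW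
  set V₀ : Matrix (Fin m) (Fin n) ℂ := star UV * V with hV₀
  set W₀ : Matrix (Fin m) (Fin n) ℂ := star UW * W with hW₀
  have hUVmem : UV ∈ Matrix.unitaryGroup (Fin m) ℂ := (hAV.eigenvectorUnitary).2
  have hUWmem : UW ∈ Matrix.unitaryGroup (Fin m) ℂ := (hAW.eigenvectorUnitary).2
  have hfV : f V = f V₀ := by
    have := hinv V₀ UV hUVmem 1 (one_mem _)
    rw [Matrix.mul_one] at this
    rw [← this]
    congr 1
    rw [hV₀, ← Matrix.mul_assoc]
    have : UV * star UV = 1 := Unitary.coe_mul_star_self _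
    rw [this, Matrix.one_mul]
  have hfW : f W = f W₀ := by
    have := hinv W₀ UW hUWmem 1 (one_mem _)
    rw [Matrix.mul_one] at this
    rw [← this]
    congr 1
    rw [hW₀, ← Matrix.mul_assoc]
    have : UW * star UW = 1 := Unitary.coe_mul_star_self _
    rw [this, Matrix.one_mul]
  -- grams of the reduced matrices
  have hgV : V₀ * V₀ᴴ = Matrix.diagonal (Complex.ofReal ∘ evV) := by
    have h1 : V₀ᴴ = Vᴴ * UV := by
      rw [hV₀, Matrix.conjTranspose_mul, Matrix.star_eq_conjTranspose,
        Matrix.conjTranspose_conjTranspose]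
    rw [hV₀, h1, Matrix.mul_assoc (star UV) V (Vᴴ * UV), ← Matrix.mul_assoc V Vᴴ UV,
      ← Matrix.mul_assoc]
    exact conj_diag hAV
  have hgW : W₀ * W₀ᴴ = Matrix.diagonal (Complex.ofReal ∘ evW) := by
    have h1 : W₀ᴴ = Wᴴ * UW := by
      rw [hW₀, Matrix.conjTranspose_mul, Matrix.star_eq_conjTranspose,
        Matrix.conjTranspose_conjTranspose]
    rw [hW₀, h1, Matrix.mul_assoc (star UW) W (Wᴴ * UW), ← Matrix.mul_assoc W Wᴴ UW,
      ← Matrix.mul_assoc]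
    exact conj_diag hAW
  -- permuted version of W₀
  set P : Matrix (Fin m) (Fin m) ℂ := σ.toPEquiv.toMatrix with hP
  set W₁ : Matrix (Fin m) (Fin n) ℂ := P * W₀ with hW₁
  have hfW₁ : f W₀ = f W₁ := by
    have := hinv W₀ P (perm_matrix_unitary σ) 1 (one_mem _)
    rw [Matrix.mul_one] at this
    rw [hW₁, this]
  have hgW₁ : W₁ * W₁ᴴ = Matrix.diagonal (Complex.ofReal ∘ evV) := by
    have hPH : Pᴴ = ((σ⁻¹ : Equiv.Perm (Fin m)).toPEquiv.toMatrix : Matrix (Fin m) (Fin m) ℂ) := by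
      ext i j
      simp only [Matrix.conjTranspose_apply, hP, PEquiv.toMatrix_toPEquiv_apply, Pi.single_apply, Matrix.one_apply]
      by_cases h : σ j = i
      · have h' : (σ⁻¹ : Equiv.Perm (Fin m)) i = j := by
          rw [Equiv.Perm.inv_eq_iff_eq]; exact h.symm
        simp [h, h']
      · have h' : ¬ ((σ⁻¹ : Equiv.Perm (Fin m)) i = j) := by
          rw [Equiv.Perm.inv_eq_iff_eq]; exact fun hc => h hc.symm
        simp [h, h']
        exact (if_neg (Ne.symm h)).trans (if_neg (Ne.symm h')).symm
    have hsub : (Matrix.diagonal (Complex.ofReal ∘ evW)).submatrix σ σ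
        = Matrix.diagonal (Complex.ofReal ∘ evV) := by
      ext i j
      by_cases hij : i = j
      · simp [hij, hσ]
      · have h2 : ¬ (σ i = σ j) := fun hc => hij (Equiv.injective σ hc)
        simp [Matrix.diagonal_apply, hij, h2]
    rw [hW₁, Matrix.conjTranspose_mul]
    calc P * W₀ * (W₀ᴴ * Pᴴ)
        = P * (W₀ * W₀ᴴ) * Pᴴ := by
          rw [Matrix.mul_assoc P W₀ _, ← Matrix.mul_assoc W₀ W₀ᴴ Pᴴ, ← Matrix.mul_assoc]
      _ = P * Matrix.diagonal (Complex.ofReal ∘ evW) * Pᴴ := by rw [hgW]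
      _ = ((Matrix.diagonal (Complex.ofReal ∘ evW)).submatrix σ id) * Pᴴ := by
          rw [hP, PEquiv.toMatrix_toPEquiv_mul]
      _ = ((Matrix.diagonal (Complex.ofReal ∘ evW)).submatrix σ id).submatrix
            id ((σ⁻¹ : Equiv.Perm (Fin m)).symm) := by
          rw [hPH, PEquiv.mul_toMatrix_toPEquiv]
      _ = (Matrix.diagonal (Complex.ofReal ∘ evW)).submatrix σ σ := by
          rw [Matrix.submatrix_submatrix]; rfl
      _ = Matrix.diagonal (Complex.ofReal ∘ evV) := hsub
  obtain ⟨C, hCmem, hC⟩ := gram_exists_unitary m n V₀ W₁ (by rw [hgV, hgW₁])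
  have : f ((1 : Matrix (Fin m) (Fin m) ℂ) * V₀ * C) = f V₀ := hinv V₀ 1 (one_mem _) C hCmem
  rw [Matrix.one_mul, hC] at this
  rw [hfV, hfW, hfW₁, ← this]
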